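/- Let D₈ be the dihedral group of order 8 (DihedralGroup 4 in Mathlib, with rotations r i and reflections sr i for i ∈ ZMod 4). The map θ : D₈ → (Fin 3 → ZMod 2) defined by θ(r i) = (0 | φ₁(i)) and θ(sr i) = (1 | φ₁(i)), where ( · | · ) denotes concatenation, is a Gray map on D₈. -/
import Mathlib


/-- A map `φ : G → (Fin n → ZMod 2)` is a Gray map if `d_φ(a,b) = w_H(φ(a b⁻¹))` is a
metric on `G` and moreover `d_φ(a,b) = d_H(φ a, φ b)` for all `a b`. -/
def IsGrayMap {G : Type*} [Group G] {n : ℕ} (φ : G → (Fin n → ZMod 2)) : Prop :=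
  (∀ a b : G, hammingNorm (φ (a * b⁻¹)) = 0 ↔ a = b) ∧
  (∀ a b : G, hammingNorm (φ (a * b⁻¹)) = hammingNorm (φ (b * a⁻¹))) ∧
  (∀ a b c : G, hammingNorm (φ (a * c⁻¹)) ≤
      hammingNorm (φ (a * b⁻¹)) + hammingNorm (φ (b * c⁻¹))) ∧
  (∀ a b : G, hammingNorm (φ (a * b⁻¹)) = hammingDist (φ a) (φ b))

/-- The standard Gray map on `C₄ = ZMod 4`. -/
def phi1 (i : ZMod 4) : Fin 2 → ZMod 2 :=
  if i = 0 then ![0, 0] else if i = 1 then ![0, 1] else if i = 2 then ![1, 1] else ![1, 0]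

/-- The map `θ` on the dihedral group `D₈` with `θ(r i) = (0 | φ₁ i)` and
`θ(sr i) = (1 | φ₁ i)`. -/
def theta9 : DihedralGroup 4 → (Fin 3 → ZMod 2)
  | .r i => Matrix.vecCons 0 (phi1 i)
  | .sr i => Matrix.vecCons 1 (phi1 i)

/-- Example 4.1: `θ` is a Gray map on `D₈ = DihedralGroup 4`. -/
theorem stmt9 : IsGrayMap theta9 := by
  refine ⟨by decide, by decide, by decide, by decide⟩
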